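/- Let n ≥ 1 be a natural number and set k := ⌈log₂ n⌉. Then the family F := {A : A ⊆ {1, …, k}} ∪ {{1, 2, …, n}} is union-closed with |⋃F| = n, its density equals D(F) = (k·2^{k−1} + n)/(n(2^k + 1)), and consequently s_n ≤ (k·2^{k−1} + n)/(n(2^k + 1)). -/

import Mathlib

/-- A finite family of finite sets is union-closed if it is closed under pairwise unions. -/
def UnionClosed (F : Finset (Finset ℕ)) : Prop :=
  ∀ A ∈ F, ∀ B ∈ F, A ∪ B ∈ F

/-- The density of a union-closed family `F`:
`D(F) = (1/(n·|F|)) · Σ_{A ∈ F} |A|` where `n = |⋃F|`. -/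
noncomputable def density (F : Finset (Finset ℕ)) : ℝ :=
  (∑ A ∈ F, (A.card : ℝ)) / (((F.sup id).card : ℝ) * (F.card : ℝ))

/-- `minDensity n` is the minimum density over all union-closed families whose
union has exactly `n` elements. -/
noncomputable def minDensity (n : ℕ) : ℝ :=
  sInf {d : ℝ | ∃ F : Finset (Finset ℕ),
    UnionClosed F ∧ (F.sup id).card = n ∧ d = density F}

open Finset in
lemma sum_powerset_card (s : Finset ℕ) :
    ∑ A ∈ s.powerset, A.card = s.card * 2 ^ (s.card - 1) := by
  induction s using Finset.induction_on with
  | empty => simp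
  | @insert a s ha ih =>
    rw [Finset.powerset_insert, Finset.sum_union, Finset.sum_image]
    · have h1 : ∑ A ∈ s.powerset, (insert a A).card = ∑ A ∈ s.powerset, (A.card + 1) := by
        apply Finset.sum_congr rfl
        intro A hA
        rw [Finset.card_insert_of_notMem fun h => ha (Finset.mem_powerset.mp hA h)]
      rw [ih, h1, Finset.sum_add_distrib, ih, Finset.sum_const, Finset.card_powerset,
        Finset.card_insert_of_notMem ha, smul_eq_mul, mul_one]
      cases s.card with
      | zero => simp
      | succ j => simp only [Nat.add_sub_cancel, pow_succ]; ring
    · intro A hA B hB h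
      have hA' : a ∉ A := fun hh => ha (Finset.mem_powerset.mp hA hh)
      have hB' : a ∉ B := fun hh => ha (Finset.mem_powerset.mp hB hh)
      rw [← Finset.erase_insert hA', ← Finset.erase_insert hB', h]
    · rw [Finset.disjoint_right]
      rintro A hA hA'
      obtain ⟨B, hB, rfl⟩ := Finset.mem_image.mp hA
      exact ha (Finset.mem_powerset.mp hA' (Finset.mem_insert_self a B))


/-- For `n ≥ 1` and `k = ⌈log₂ n⌉`, the family
`F = {A : A ⊆ {1,…,k}} ∪ {{1,…,n}}` is union-closed with `|⋃F| = n`, its density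
is `(k·2^(k-1) + n)/(n·(2^k + 1))`, hence `s_n ≤ (k·2^(k-1) + n)/(n·(2^k + 1))`. -/

theorem stmt_6 (n : ℕ) (hn : 1 ≤ n) (k : ℕ) (hk : k = ⌈Real.logb 2 (n : ℝ)⌉₊)
    (F : Finset (Finset ℕ))
    (hF : F = (Finset.Icc 1 k).powerset ∪ {Finset.Icc 1 n}) :
    UnionClosed F ∧ (F.sup id).card = n ∧
      density F = ((k : ℝ) * 2 ^ (k - 1) + (n : ℝ)) / ((n : ℝ) * (2 ^ k + 1)) ∧
      minDensity n ≤ ((k : ℝ) * 2 ^ (k - 1) + (n : ℝ)) / ((n : ℝ) * (2 ^ k + 1)) := by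
  -- k < n
  have hpow : n ≤ 2 ^ (n - 1) := by
    have := Nat.lt_two_pow_self (n := n - 1)
    omega
  have hkn : k < n := by
    have hkle : k ≤ n - 1 := by
      rw [hk]
      apply Nat.ceil_le.mpr
      rw [Real.logb_le_iff_le_rpow (by norm_num) (by positivity)]
      rw [show ((n - 1 : ℕ) : ℝ) = ((n - 1 : ℕ) : ℝ) from rfl, Real.rpow_natCast]
      exact_mod_cast hpow
    omega
  have hsub : Finset.Icc 1 k ⊆ Finset.Icc 1 n := Finset.Icc_subset_Icc le_rfl hkn.le
  have hcardk : (Finset.Icc 1 k).card = k := by rw [Nat.card_Icc]; omega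
  have hcardn : (Finset.Icc 1 n).card = n := by rw [Nat.card_Icc]; omega
  have hnotmem : Finset.Icc 1 n ∉ (Finset.Icc 1 k).powerset := by
    intro h
    have := Finset.card_le_card (Finset.mem_powerset.mp h)
    rw [hcardk, hcardn] at this
    omega
  have hsubn : ∀ A ∈ F, A ⊆ Finset.Icc 1 n := by
    intro A hA
    rw [hF, Finset.mem_union] at hA
    rcases hA with hA | hA
    · exact (Finset.mem_powerset.mp hA).trans hsub
    · rw [Finset.mem_singleton] at hA; rw [hA]
  have hmemIcc : Finset.Icc 1 n ∈ F := by
    rw [hF]; exact Finset.mem_union_right _ (Finset.mem_singleton_self _)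
  have huc : UnionClosed F := by
    intro A hA B hB
    rw [hF, Finset.mem_union] at hA hB ⊢
    rcases hA with hA | hA
    · rcases hB with hB | hB
      · exact Or.inl (Finset.mem_powerset.mpr
          (Finset.union_subset (Finset.mem_powerset.mp hA) (Finset.mem_powerset.mp hB)))
      · rw [Finset.mem_singleton] at hB
        right
        rw [Finset.mem_singleton, hB, Finset.union_eq_right.mpr
          ((Finset.mem_powerset.mp hA).trans hsub)]
    · rw [Finset.mem_singleton] at hA
      right
      rw [Finset.mem_singleton, hA]
      rcases hB with hB | hB
      · rw [Finset.union_eq_left.mpr ((Finset.mem_powerset.mp hB).trans hsub)]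
      · rw [Finset.mem_singleton] at hB; rw [hB, Finset.union_self]
  have hsup : F.sup id = Finset.Icc 1 n := by
    apply le_antisymm
    · exact Finset.sup_le fun A hA => hsubn A hA
    · exact Finset.le_sup (f := id) hmemIcc
  have hsupcard : (F.sup id).card = n := by rw [hsup, hcardn]
  have hdisj : Disjoint (Finset.Icc 1 k).powerset ({Finset.Icc 1 n} : Finset (Finset ℕ)) := by
    rw [Finset.disjoint_singleton_right]; exact hnotmem
  have hcardF : F.card = 2 ^ k + 1 := by
    rw [hF, Finset.card_union_of_disjoint hdisj, Finset.card_powerset, hcardk,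
      Finset.card_singleton]
  have hsum : ∑ A ∈ F, A.card = k * 2 ^ (k - 1) + n := by
    rw [hF, Finset.sum_union hdisj, sum_powerset_card, hcardk, Finset.sum_singleton, hcardn]
  have hdens : density F = ((k : ℝ) * 2 ^ (k - 1) + (n : ℝ)) / ((n : ℝ) * (2 ^ k + 1)) := by
    unfold density
    rw [hsupcard, hcardF, ← Nat.cast_sum, hsum]
    push_cast
    ring_nf
  refine ⟨huc, hsupcard, hdens, ?_⟩
  have hbdd : BddBelow {d : ℝ | ∃ F : Finset (Finset ℕ),
      UnionClosed F ∧ (F.sup id).card = n ∧ d = density F} := by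
    refine ⟨0, fun d hd => ?_⟩
    obtain ⟨G, -, -, rfl⟩ := hd
    unfold density
    positivity
  exact hdens ▸ csInf_le hbdd ⟨F, huc, hsupcard, rfl⟩
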